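/- Let Ω ⊆ ℂ be open and let A, B, C, D : Ω → ℂ be holomorphic with A(z)D(z) − B(z)C(z) = 1 for all z ∈ Ω. Define w(z) = 1/(|A(z)|² + |B(z)|²) and ζ(z) = (conj(A(z))·C(z) + conj(B(z))·D(z))/(|A(z)|² + |B(z)|²). Then for every z ∈ Ω, −(ζ(z)²/w(z)²)·conj(D_z ζ(z) + i·D_{iz} ζ(z)) + D_z ζ(z) − 2i·(log w(z))·D_{iz} ζ(z) − (2ζ(z)/w(z))·D_z w(z) = 2z·(C′(z)·D(z) − C(z)·D′(z)) + i·D_{iz} ζ(z) − 2i·(D_{iz} ζ(z)·log w(z) + ζ(z)·(1/w(z))·D_{iz} w(z)), where D_v f(z) denotes the real Fréchet derivative of f at z applied to the vector v ∈ ℂ. -/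

import Mathlib

open Complex ContinuousLinearMap

lemma hasFDerivAt_real_of_hasDerivAt' {f : ℂ → ℂ} {f' z : ℂ} (h : HasDerivAt f f' z) :
    HasFDerivAt f (f' • (1 : ℂ →L[ℝ] ℂ)) z := by
  have := (h.hasFDerivAt.restrictScalars ℝ)
  have e : f' • (1 : ℂ →L[ℝ] ℂ) = (toSpanSingleton ℂ f').restrictScalars ℝ := by
    ext v
    simp [mul_comm]
  rw [e]; exact this

lemma hasFDerivAt_conj_comp' {f : ℂ → ℂ} {f' z : ℂ} (h : HasDerivAt f f' z) :
    HasFDerivAt (fun x => (starRingEnd ℂ) (f x))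
      (Complex.conjCLE.toContinuousLinearMap.comp (f' • (1 : ℂ →L[ℝ] ℂ))) z :=
  (Complex.conjCLE.toContinuousLinearMap.hasFDerivAt).comp z (hasFDerivAt_real_of_hasDerivAt' h)

set_option maxHeartbeats 2000000 in
set_option maxRecDepth 4000 in
/-- Expression of the coefficient `a₃(z)` (lemma coeffintegral, third identity):
`−(ζ²/w²)·conj(ρ ∂ζ/∂ρ + i ∂ζ/∂τ) + ρ ∂ζ/∂ρ − 2i (ln w) ∂ζ/∂τ − (2ζ/w)·ρ ∂w/∂ρ
 = 2z(C′D − CD′) + i ∂ζ/∂τ − 2i ∂(ζ ln w)/∂τ`,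
where `ρ ∂f/∂ρ(z) = D_z f(z)` and `∂f/∂τ(z) = D_{iz} f(z)` are real Fréchet
derivatives applied to the vectors `z` and `iz` respectively. -/
theorem stmt4 (Ω : Set ℂ) (hΩ : IsOpen Ω) (A B C D : ℂ → ℂ)
    (hA : DifferentiableOn ℂ A Ω) (hB : DifferentiableOn ℂ B Ω)
    (hC : DifferentiableOn ℂ C Ω) (hD : DifferentiableOn ℂ D Ω)
    (hdet : ∀ z ∈ Ω, A z * D z - B z * C z = 1)
    (w : ℂ → ℝ) (ζ : ℂ → ℂ)
    (hw : ∀ z, w z = 1 / (‖A z‖ ^ 2 + ‖B z‖ ^ 2))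
    (hζ : ∀ z, ζ z = ((starRingEnd ℂ) (A z) * C z + (starRingEnd ℂ) (B z) * D z) /
      ((‖A z‖ ^ 2 + ‖B z‖ ^ 2 : ℝ) : ℂ)) :
    ∀ z ∈ Ω,
      - (ζ z ^ 2 / (w z : ℂ) ^ 2) *
          (starRingEnd ℂ) (fderiv ℝ ζ z z + Complex.I * fderiv ℝ ζ z (Complex.I * z))
        + fderiv ℝ ζ z z
        - 2 * Complex.I * (Real.log (w z) : ℂ) * fderiv ℝ ζ z (Complex.I * z)
        - (2 * ζ z / (w z : ℂ)) * ((fderiv ℝ w z z : ℝ) : ℂ) =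
      2 * z * (deriv C z * D z - C z * deriv D z)
        + Complex.I * fderiv ℝ ζ z (Complex.I * z)
        - 2 * Complex.I *
            (fderiv ℝ ζ z (Complex.I * z) * (Real.log (w z) : ℂ)
              + ζ z * ((1 / w z : ℝ) : ℂ) * ((fderiv ℝ w z (Complex.I * z) : ℝ) : ℂ)) := by
  intro z hz
  have hnhds := hΩ.mem_nhds hz
  have hdA : HasDerivAt A (deriv A z) z := ((hA z hz).differentiableAt hnhds).hasDerivAt
  have hdB : HasDerivAt B (deriv B z) z := ((hB z hz).differentiableAt hnhds).hasDerivAt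
  have hdC : HasDerivAt C (deriv C z) z := ((hC z hz).differentiableAt hnhds).hasDerivAt
  have hdD : HasDerivAt D (deriv D z) z := ((hD z hz).differentiableAt hnhds).hasDerivAt
  have h1 : A z * D z - B z * C z = 1 := hdet z hz
  have h3 : deriv A z * D z + A z * deriv D z - (deriv B z * C z + B z * deriv C z) = 0 := by
    have hG : HasDerivAt (fun x => A x * D x - B x * C x)
        (deriv A z * D z + A z * deriv D z - (deriv B z * C z + B z * deriv C z)) z :=
      (hdA.mul hdD).sub (hdB.mul hdC)
    have hE : (fun x => A x * D x - B x * C x) =ᶠ[nhds z] (fun _ => 1) := by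
      filter_upwards [hnhds] with x hx using hdet x hx
    have := hG.deriv
    rw [Filter.EventuallyEq.deriv_eq hE, deriv_const] at this
    exact this.symm
  have h2 : (starRingEnd ℂ) (A z) * (starRingEnd ℂ) (D z)
      - (starRingEnd ℂ) (B z) * (starRingEnd ℂ) (C z) = 1 := by
    have := congrArg (starRingEnd ℂ) h1
    simpa using this
  have hr0 : (0:ℝ) < ‖A z‖ ^ 2 + ‖B z‖ ^ 2 := by
    rcases eq_or_ne (A z) 0 with ha | ha
    · have hb : B z ≠ 0 := by intro hb; rw [ha, hb] at h1; simp at h1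
      have := norm_pos_iff.mpr hb
      positivity
    · have := norm_pos_iff.mpr ha
      positivity
  have hneq : ∀ x : ℂ, (((starRingEnd ℂ) (A x) * A x + (starRingEnd ℂ) (B x) * B x)).re
      = ‖A x‖ ^ 2 + ‖B x‖ ^ 2 := by
    intro x
    rw [Complex.add_re, ← Complex.normSq_eq_conj_mul_self, ← Complex.normSq_eq_conj_mul_self]
    simp [Complex.sq_norm]
  have hg := ((hasFDerivAt_conj_comp' hdA).mul (hasFDerivAt_real_of_hasDerivAt' hdA)).add
    ((hasFDerivAt_conj_comp' hdB).mul (hasFDerivAt_real_of_hasDerivAt' hdB))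
  have hn := Complex.reCLM.hasFDerivAt.comp z hg
  have hr0' : ((⇑Complex.reCLM ∘ fun x => (starRingEnd ℂ) (A x) * A x + (starRingEnd ℂ) (B x) * B x) z) ≠ 0 := by
    show (((starRingEnd ℂ) (A z) * A z + (starRingEnd ℂ) (B z) * B z)).re ≠ 0
    rw [hneq]; exact ne_of_gt hr0
  have hinv := ((hasDerivAt_inv hr0').hasFDerivAt.comp z hn)
  have hwfun : w = ((fun y : ℝ => y⁻¹) ∘ (⇑Complex.reCLM ∘ fun x => (starRingEnd ℂ) (A x) * A x + (starRingEnd ℂ) (B x) * B x)) := by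
    funext x
    show w x = (((starRingEnd ℂ) (A x) * A x + (starRingEnd ℂ) (B x) * B x)).re⁻¹
    rw [hw, hneq, one_div]
  have hwd : HasFDerivAt w _ z := hwfun ▸ hinv
  have hp := ((hasFDerivAt_conj_comp' hdA).mul (hasFDerivAt_real_of_hasDerivAt' hdC)).add
    ((hasFDerivAt_conj_comp' hdB).mul (hasFDerivAt_real_of_hasDerivAt' hdD))
  have hζd0 := hp.mul (Complex.ofRealCLM.hasFDerivAt.comp z hwd)
  have hζfun : ζ = fun x => ((starRingEnd ℂ) (A x) * C x + (starRingEnd ℂ) (B x) * D x) * Complex.ofRealCLM (w x) := by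
    funext x
    rw [hζ x, hw x]
    simp [Complex.ofRealCLM_apply, div_eq_mul_inv]
  have hζd0' : HasFDerivAt (fun x => ((starRingEnd ℂ) (A x) * C x + (starRingEnd ℂ) (B x) * D x) * Complex.ofRealCLM (w x)) _ z := hζd0
  have hζd : HasFDerivAt ζ _ z := hζfun ▸ hζd0'
  -- self-conjugacy helpers
  have hre : ∀ x : ℂ, (starRingEnd ℂ) x = x → ((x.re : ℝ) : ℂ) = x :=
    fun x h => Complex.conj_eq_iff_re.mp h
  have hY : (((((starRingEnd ℂ) (A z) * A z + (starRingEnd ℂ) (B z) * B z)).re : ℝ) : ℂ)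
      = (starRingEnd ℂ) (A z) * A z + (starRingEnd ℂ) (B z) * B z := by
    apply hre
    simp only [map_add, map_mul, Complex.conj_conj]
    ring
  have hX : ∀ v : ℂ, ((((starRingEnd ℂ) (A z) * (deriv A z * v) + A z * (starRingEnd ℂ) (deriv A z * v) +
        ((starRingEnd ℂ) (B z) * (deriv B z * v) + B z * (starRingEnd ℂ) (deriv B z * v))).re : ℝ) : ℂ)
      = (starRingEnd ℂ) (A z) * (deriv A z * v) + A z * (starRingEnd ℂ) (deriv A z * v) +
        ((starRingEnd ℂ) (B z) * (deriv B z * v) + B z * (starRingEnd ℂ) (deriv B z * v)) := by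
    intro v
    apply hre
    simp only [map_add, map_mul, Complex.conj_conj]
    ring
  -- complex-level formulas for derivatives
  have hcoe : ((‖A z‖ ^ 2 + ‖B z‖ ^ 2 : ℝ) : ℂ)
      = (starRingEnd ℂ) (A z) * A z + (starRingEnd ℂ) (B z) * B z := by
    rw [← hneq z]; exact hY
  have hwz : ((w z : ℝ) : ℂ) = ((starRingEnd ℂ) (A z) * A z + (starRingEnd ℂ) (B z) * B z)⁻¹ := by
    rw [hw z, one_div, Complex.ofReal_inv, hcoe]
  set u := ((w z : ℝ) : ℂ) with hu_def
  have hwz : u = ((starRingEnd ℂ) (A z) * A z + (starRingEnd ℂ) (B z) * B z)⁻¹ := by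
    rw [hu_def, hw z, one_div, Complex.ofReal_inv, hcoe]
  have hN0 : ((starRingEnd ℂ) (A z) * A z + (starRingEnd ℂ) (B z) * B z) ≠ 0 := by
    rw [← hcoe]
    exact_mod_cast ne_of_gt hr0
  have hu : ((starRingEnd ℂ) (A z) * A z + (starRingEnd ℂ) (B z) * B z) * u = 1 := by
    rw [hwz]; exact mul_inv_cancel₀ hN0
  have hcu : (starRingEnd ℂ) u = u := by rw [hu_def]; exact Complex.conj_ofReal _
  have hudef2 : u = ((w z : ℝ) : ℂ) := hu_def
  clear_value u
  have EW : ∀ v : ℂ, ((fderiv ℝ w z v : ℝ) : ℂ) =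
      -((starRingEnd ℂ) (A z) * (deriv A z * v) + A z * (starRingEnd ℂ) (deriv A z * v) +
        ((starRingEnd ℂ) (B z) * (deriv B z * v) + B z * (starRingEnd ℂ) (deriv B z * v))) * u ^ 2 := by
    intro v
    rw [hwd.fderiv]
    simp only [ContinuousLinearMap.coe_comp', Function.comp_apply, ContinuousLinearMap.add_apply,
      ContinuousLinearMap.coe_smul', Pi.smul_apply, ContinuousLinearMap.one_apply,
      ContinuousLinearMap.smulRight_apply, Complex.reCLM_apply, Complex.conjCLE_apply,
      smul_eq_mul, ContinuousLinearEquiv.coe_coe, ContinuousLinearMap.toSpanSingleton_apply]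
    push_cast
    rw [hX v, hY, hwz, inv_pow]
    ring
  have EZ : ∀ v : ℂ, fderiv ℝ ζ z v =
      ((starRingEnd ℂ) (A z) * C z + (starRingEnd ℂ) (B z) * D z) *
        (-((starRingEnd ℂ) (A z) * (deriv A z * v) + A z * (starRingEnd ℂ) (deriv A z * v) +
          ((starRingEnd ℂ) (B z) * (deriv B z * v) + B z * (starRingEnd ℂ) (deriv B z * v)))) * u ^ 2
      + u * ((starRingEnd ℂ) (A z) * (deriv C z * v) + C z * (starRingEnd ℂ) (deriv A z * v) +
          ((starRingEnd ℂ) (B z) * (deriv D z * v) + D z * (starRingEnd ℂ) (deriv B z * v))) := by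
    intro v
    rw [hζd.fderiv]
    simp only [ContinuousLinearMap.coe_comp', Function.comp_apply, ContinuousLinearMap.add_apply,
      ContinuousLinearMap.coe_smul', Pi.smul_apply, ContinuousLinearMap.one_apply,
      ContinuousLinearMap.smulRight_apply, Complex.reCLM_apply, Complex.conjCLE_apply,
      Complex.ofRealCLM_apply, smul_eq_mul, ContinuousLinearEquiv.coe_coe,
      ContinuousLinearMap.toSpanSingleton_apply, Pi.add_apply, Pi.mul_apply]
    push_cast
    rw [hX v, hY, ← hu_def, hwz, inv_pow]
    ring
  have hzeta : ζ z = ((starRingEnd ℂ) (A z) * C z + (starRingEnd ℂ) (B z) * D z) /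
      ((starRingEnd ℂ) (A z) * A z + (starRingEnd ℂ) (B z) * B z) := by
    rw [hζ z, hcoe]
  have hwz' : ((1 / w z : ℝ) : ℂ) = ((starRingEnd ℂ) (A z) * A z + (starRingEnd ℂ) (B z) * B z) := by
    rw [hw z, one_div, one_div, inv_inv, hcoe]
  have hdiv1 : ζ z ^ 2 / u ^ 2 = ((starRingEnd ℂ) (A z) * C z + (starRingEnd ℂ) (B z) * D z) ^ 2 := by
    rw [hzeta, hwz]
    field_simp
  have hdiv2 : 2 * ζ z / u = 2 * ((starRingEnd ℂ) (A z) * C z + (starRingEnd ℂ) (B z) * D z) := by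
    rw [hzeta, hwz]
    field_simp
  have hdiv3 : ζ z * ((1 / w z : ℝ) : ℂ) = ((starRingEnd ℂ) (A z) * C z + (starRingEnd ℂ) (B z) * D z) := by
    rw [hzeta, hwz']
    exact div_mul_cancel₀ _ hN0
  -- the key algebraic identity
  have hT : ((starRingEnd ℂ) (A z) * deriv C z + (starRingEnd ℂ) (B z) * deriv D z)
      - ((starRingEnd ℂ) (A z) * C z + (starRingEnd ℂ) (B z) * D z)^2 *
          (deriv A z * (starRingEnd ℂ) (C z) + deriv B z * (starRingEnd ℂ) (D z))
      + ((starRingEnd ℂ) (A z) * C z + (starRingEnd ℂ) (B z) * D z) *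
          (deriv A z * (starRingEnd ℂ) (A z) + deriv B z * (starRingEnd ℂ) (B z)) *
          (C z * (starRingEnd ℂ) (C z) + D z * (starRingEnd ℂ) (D z))
      = (deriv C z * D z - C z * deriv D z) *
          (A z * (starRingEnd ℂ) (A z) + B z * (starRingEnd ℂ) (B z)) := by
    linear_combination (-(starRingEnd ℂ (A z) * deriv C z) - starRingEnd ℂ (B z) * deriv D z) * h1
      + ((starRingEnd ℂ (A z) * C z + starRingEnd ℂ (B z) * D z) * (deriv A z * D z - deriv B z * C z)) * h2
      + (starRingEnd ℂ (A z) * C z + starRingEnd ℂ (B z) * D z) * h3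
  have hPP : ((starRingEnd ℂ) (A z) * C z + (starRingEnd ℂ) (B z) * D z) *
      (A z * (starRingEnd ℂ) (C z) + B z * (starRingEnd ℂ) (D z))
      = ((starRingEnd ℂ) (A z) * A z + (starRingEnd ℂ) (B z) * B z) *
        (C z * (starRingEnd ℂ) (C z) + D z * (starRingEnd ℂ) (D z)) - 1 := by
    linear_combination (-((starRingEnd ℂ) (A z) * (starRingEnd ℂ) (D z) -
      (starRingEnd ℂ) (B z) * (starRingEnd ℂ) (C z))) * h1 - h2
  -- finish
  rw [hdiv1, hdiv2, hdiv3, EZ z, EZ (Complex.I * z), EW z, EW (Complex.I * z)]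
  simp only [map_add, map_mul, map_neg, map_pow, map_one, map_ofNat, Complex.conj_conj,
    Complex.conj_I, hcu]
  linear_combination (2 * z * u ^ 2 *
      ((starRingEnd ℂ) (A z) * C z + (starRingEnd ℂ) (B z) * D z) *
      (deriv A z * (starRingEnd ℂ) (A z) + deriv B z * (starRingEnd ℂ) (B z))) * hPP
    + (2 * z * u) * hT
    + (2 * z * u * ((starRingEnd ℂ) (A z) * C z + (starRingEnd ℂ) (B z) * D z) *
        (deriv A z * (starRingEnd ℂ) (A z) + deriv B z * (starRingEnd ℂ) (B z)) *
        (C z * (starRingEnd ℂ) (C z) + D z * (starRingEnd ℂ) (D z))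
      + 2 * z * (deriv C z * D z - C z * deriv D z)) * hu
    + ((-1) * deriv D z * (starRingEnd ℂ) (B z) * z * u
      + (-1) * deriv C z * (starRingEnd ℂ) (A z) * z * u
      + (1) * D z * (starRingEnd ℂ) (deriv B z) * (starRingEnd ℂ) z * u
      + (-1) * D z * deriv B z * (starRingEnd ℂ) (B z) ^ 2 * z * u ^ 2
      + (-1) * D z * deriv A z * (starRingEnd ℂ) (A z) * (starRingEnd ℂ) (B z) * z * u ^ 2
      + (1) * D z ^ 2 * deriv B z * (starRingEnd ℂ) (B z) ^ 2 * (starRingEnd ℂ) (D z) * z * u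
      + (1) * D z ^ 2 * deriv A z * (starRingEnd ℂ) (B z) ^ 2 * (starRingEnd ℂ) (C z) * z * u
      + (1) * C z * (starRingEnd ℂ) (deriv A z) * (starRingEnd ℂ) z * u
      + (-1) * C z * deriv B z * (starRingEnd ℂ) (A z) * (starRingEnd ℂ) (B z) * z * u ^ 2
      + (-1) * C z * deriv A z * (starRingEnd ℂ) (A z) ^ 2 * z * u ^ 2
      + (2) * C z * D z * deriv B z * (starRingEnd ℂ) (A z) * (starRingEnd ℂ) (B z) * (starRingEnd ℂ) (D z) * z * u
      + (2) * C z * D z * deriv A z * (starRingEnd ℂ) (A z) * (starRingEnd ℂ) (B z) * (starRingEnd ℂ) (C z) * z * u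
      + (1) * C z ^ 2 * deriv B z * (starRingEnd ℂ) (A z) ^ 2 * (starRingEnd ℂ) (D z) * z * u
      + (1) * C z ^ 2 * deriv A z * (starRingEnd ℂ) (A z) ^ 2 * (starRingEnd ℂ) (C z) * z * u
      + (1) * B z * D z * (starRingEnd ℂ) (B z) * (starRingEnd ℂ) (deriv B z) * (starRingEnd ℂ) z * u ^ 2
      + (-1) * B z * D z ^ 2 * (starRingEnd ℂ) (B z) ^ 2 * (starRingEnd ℂ) (deriv D z) * (starRingEnd ℂ) z * u
      + (-1) * B z * D z ^ 2 * deriv B z * (starRingEnd ℂ) (B z) ^ 3 * (starRingEnd ℂ) (D z) * z * u ^ 2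
      + (-1) * B z * D z ^ 2 * deriv A z * (starRingEnd ℂ) (A z) * (starRingEnd ℂ) (B z) ^ 2 * (starRingEnd ℂ) (D z) * z * u ^ 2
      + (1) * B z * C z * (starRingEnd ℂ) (A z) * (starRingEnd ℂ) (deriv B z) * (starRingEnd ℂ) z * u ^ 2
      + (-2) * B z * C z * D z * (starRingEnd ℂ) (A z) * (starRingEnd ℂ) (B z) * (starRingEnd ℂ) (deriv D z) * (starRingEnd ℂ) z * u
      + (-2) * B z * C z * D z * deriv B z * (starRingEnd ℂ) (A z) * (starRingEnd ℂ) (B z) ^ 2 * (starRingEnd ℂ) (D z) * z * u ^ 2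
      + (-2) * B z * C z * D z * deriv A z * (starRingEnd ℂ) (A z) ^ 2 * (starRingEnd ℂ) (B z) * (starRingEnd ℂ) (D z) * z * u ^ 2
      + (-1) * B z * C z ^ 2 * (starRingEnd ℂ) (A z) ^ 2 * (starRingEnd ℂ) (deriv D z) * (starRingEnd ℂ) z * u
      + (-1) * B z * C z ^ 2 * deriv B z * (starRingEnd ℂ) (A z) ^ 2 * (starRingEnd ℂ) (B z) * (starRingEnd ℂ) (D z) * z * u ^ 2
      + (-1) * B z * C z ^ 2 * deriv A z * (starRingEnd ℂ) (A z) ^ 3 * (starRingEnd ℂ) (D z) * z * u ^ 2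
      + (1) * B z ^ 2 * D z ^ 2 * (starRingEnd ℂ) (B z) ^ 2 * (starRingEnd ℂ) (D z) * (starRingEnd ℂ) (deriv B z) * (starRingEnd ℂ) z * u ^ 2
      + (2) * B z ^ 2 * C z * D z * (starRingEnd ℂ) (A z) * (starRingEnd ℂ) (B z) * (starRingEnd ℂ) (D z) * (starRingEnd ℂ) (deriv B z) * (starRingEnd ℂ) z * u ^ 2
      + (1) * B z ^ 2 * C z ^ 2 * (starRingEnd ℂ) (A z) ^ 2 * (starRingEnd ℂ) (D z) * (starRingEnd ℂ) (deriv B z) * (starRingEnd ℂ) z * u ^ 2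
      + (1) * A z * D z * (starRingEnd ℂ) (B z) * (starRingEnd ℂ) (deriv A z) * (starRingEnd ℂ) z * u ^ 2
      + (-1) * A z * D z ^ 2 * (starRingEnd ℂ) (B z) ^ 2 * (starRingEnd ℂ) (deriv C z) * (starRingEnd ℂ) z * u
      + (-1) * A z * D z ^ 2 * deriv B z * (starRingEnd ℂ) (B z) ^ 3 * (starRingEnd ℂ) (C z) * z * u ^ 2
      + (-1) * A z * D z ^ 2 * deriv A z * (starRingEnd ℂ) (A z) * (starRingEnd ℂ) (B z) ^ 2 * (starRingEnd ℂ) (C z) * z * u ^ 2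
      + (1) * A z * C z * (starRingEnd ℂ) (A z) * (starRingEnd ℂ) (deriv A z) * (starRingEnd ℂ) z * u ^ 2
      + (-2) * A z * C z * D z * (starRingEnd ℂ) (A z) * (starRingEnd ℂ) (B z) * (starRingEnd ℂ) (deriv C z) * (starRingEnd ℂ) z * u
      + (-2) * A z * C z * D z * deriv B z * (starRingEnd ℂ) (A z) * (starRingEnd ℂ) (B z) ^ 2 * (starRingEnd ℂ) (C z) * z * u ^ 2
      + (-2) * A z * C z * D z * deriv A z * (starRingEnd ℂ) (A z) ^ 2 * (starRingEnd ℂ) (B z) * (starRingEnd ℂ) (C z) * z * u ^ 2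
      + (-1) * A z * C z ^ 2 * (starRingEnd ℂ) (A z) ^ 2 * (starRingEnd ℂ) (deriv C z) * (starRingEnd ℂ) z * u
      + (-1) * A z * C z ^ 2 * deriv B z * (starRingEnd ℂ) (A z) ^ 2 * (starRingEnd ℂ) (B z) * (starRingEnd ℂ) (C z) * z * u ^ 2
      + (-1) * A z * C z ^ 2 * deriv A z * (starRingEnd ℂ) (A z) ^ 3 * (starRingEnd ℂ) (C z) * z * u ^ 2
      + (1) * A z * B z * D z ^ 2 * (starRingEnd ℂ) (B z) ^ 2 * (starRingEnd ℂ) (D z) * (starRingEnd ℂ) (deriv A z) * (starRingEnd ℂ) z * u ^ 2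
      + (1) * A z * B z * D z ^ 2 * (starRingEnd ℂ) (B z) ^ 2 * (starRingEnd ℂ) (C z) * (starRingEnd ℂ) (deriv B z) * (starRingEnd ℂ) z * u ^ 2
      + (2) * A z * B z * C z * D z * (starRingEnd ℂ) (A z) * (starRingEnd ℂ) (B z) * (starRingEnd ℂ) (D z) * (starRingEnd ℂ) (deriv A z) * (starRingEnd ℂ) z * u ^ 2
      + (2) * A z * B z * C z * D z * (starRingEnd ℂ) (A z) * (starRingEnd ℂ) (B z) * (starRingEnd ℂ) (C z) * (starRingEnd ℂ) (deriv B z) * (starRingEnd ℂ) z * u ^ 2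
      + (1) * A z * B z * C z ^ 2 * (starRingEnd ℂ) (A z) ^ 2 * (starRingEnd ℂ) (D z) * (starRingEnd ℂ) (deriv A z) * (starRingEnd ℂ) z * u ^ 2
      + (1) * A z * B z * C z ^ 2 * (starRingEnd ℂ) (A z) ^ 2 * (starRingEnd ℂ) (C z) * (starRingEnd ℂ) (deriv B z) * (starRingEnd ℂ) z * u ^ 2
      + (1) * A z ^ 2 * D z ^ 2 * (starRingEnd ℂ) (B z) ^ 2 * (starRingEnd ℂ) (C z) * (starRingEnd ℂ) (deriv A z) * (starRingEnd ℂ) z * u ^ 2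
      + (2) * A z ^ 2 * C z * D z * (starRingEnd ℂ) (A z) * (starRingEnd ℂ) (B z) * (starRingEnd ℂ) (C z) * (starRingEnd ℂ) (deriv A z) * (starRingEnd ℂ) z * u ^ 2
      + (1) * A z ^ 2 * C z ^ 2 * (starRingEnd ℂ) (A z) ^ 2 * (starRingEnd ℂ) (C z) * (starRingEnd ℂ) (deriv A z) * (starRingEnd ℂ) z * u ^ 2) * Complex.I_sq
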